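/- Let |ψ⟩ be a bipartite pure state with Schmidt rank r on H_A ⊗ H_B, and k a positive integer. If k ≥ r then the operator R_k(ψ) = k ρ_A ⊗ I_B − |ψ⟩⟨ψ| is positive semidefinite, while if 1 ≤ k < r then R_k(ψ) has exactly one negative eigenvalue. -/

import Mathlib

open Matrix Kronecker ComplexOrder Finset

lemma key1 {dA dB : ℕ} (lam : Fin dA → ℝ) (hlam : ∀ i, 0 ≤ lam i)
    (φ y : Fin dA → Fin dB → ℂ)
    (hφ0 : ∀ i, lam i = 0 → ∀ b, φ i b = 0)
    (hφn : ∀ i, ∑ b, ‖φ i b‖ ^ 2 = lam i) :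
    ‖∑ i, ∑ b, (starRingEnd ℂ) (φ i b) * y i b‖ ^ 2 ≤
      (Finset.univ.filter fun i => lam i ≠ 0).card *
        ∑ i, ∑ b, lam i * ‖y i b‖ ^ 2 := by
  classical
  set S := Finset.univ.filter fun i => lam i ≠ 0 with hS
  set c : Fin dA → ℂ := fun i => ∑ b, (starRingEnd ℂ) (φ i b) * y i b with hc
  have hc0 : ∀ i ∉ S, c i = 0 := by
    intro i hi
    have : lam i = 0 := by
      by_contra h; exact hi (by simp [hS, h])
    simp [hc, hφ0 i this]
  have hsum : ∑ i, c i = ∑ i ∈ S, c i :=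
    (Finset.sum_subset (Finset.subset_univ S) (fun i _ hi => hc0 i hi)).symm
  -- Cauchy-Schwarz per i : ‖c i‖^2 ≤ lam i * ∑ b ‖y i b‖^2
  have hCS : ∀ i, ‖c i‖ ^ 2 ≤ lam i * ∑ b, ‖y i b‖ ^ 2 := by
    intro i
    have h1 : c i = @inner ℂ _ _ ((WithLp.equiv 2 (Fin dB → ℂ)).symm (φ i))
        ((WithLp.equiv 2 (Fin dB → ℂ)).symm (y i)) := by
      simp [PiLp.inner_apply, RCLike.inner_apply, hc]
      exact Finset.sum_congr rfl fun b _ => mul_comm _ _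
    have h2 := norm_inner_le_norm (𝕜 := ℂ) ((WithLp.equiv 2 (Fin dB → ℂ)).symm (φ i))
        ((WithLp.equiv 2 (Fin dB → ℂ)).symm (y i))
    have h3 : ‖c i‖ ≤ ‖(WithLp.equiv 2 (Fin dB → ℂ)).symm (φ i)‖ *
        ‖(WithLp.equiv 2 (Fin dB → ℂ)).symm (y i)‖ := h1 ▸ h2
    have h4 : ‖c i‖ ^ 2 ≤ (‖(WithLp.equiv 2 (Fin dB → ℂ)).symm (φ i)‖ *
        ‖(WithLp.equiv 2 (Fin dB → ℂ)).symm (y i)‖) ^ 2 := by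
      exact pow_le_pow_left₀ (norm_nonneg _) h3 2
    have h5 : ‖(WithLp.equiv 2 (Fin dB → ℂ)).symm (φ i)‖ ^ 2 = lam i := by
      rw [EuclideanSpace.norm_eq, Real.sq_sqrt (by positivity)]
      simpa using hφn i
    have h6 : ‖(WithLp.equiv 2 (Fin dB → ℂ)).symm (y i)‖ ^ 2 = ∑ b, ‖y i b‖ ^ 2 := by
      rw [EuclideanSpace.norm_eq, Real.sq_sqrt (by positivity)]
      simp
    calc ‖c i‖ ^ 2 ≤ _ := h4
      _ = lam i * ∑ b, ‖y i b‖ ^ 2 := by rw [mul_pow, h5, h6]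
  have step1 : ‖∑ i, c i‖ ≤ ∑ i ∈ S, ‖c i‖ := by
    rw [hsum]; exact norm_sum_le _ _
  have step2 : (∑ i ∈ S, ‖c i‖) ^ 2 ≤ S.card * ∑ i ∈ S, ‖c i‖ ^ 2 :=
    sq_sum_le_card_mul_sum_sq
  have step3 : ∑ i ∈ S, ‖c i‖ ^ 2 ≤ ∑ i, lam i * ∑ b, ‖y i b‖ ^ 2 := by
    calc ∑ i ∈ S, ‖c i‖ ^ 2 ≤ ∑ i ∈ S, lam i * ∑ b, ‖y i b‖ ^ 2 :=
          Finset.sum_le_sum fun i _ => hCS i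
      _ ≤ ∑ i, lam i * ∑ b, ‖y i b‖ ^ 2 := by
          apply Finset.sum_le_sum_of_subset_of_nonneg (Finset.subset_univ S)
          intro i _ _; exact mul_nonneg (hlam i) (by positivity)
  have step0 : ‖∑ i, c i‖ ^ 2 ≤ (∑ i ∈ S, ‖c i‖) ^ 2 :=
    pow_le_pow_left₀ (norm_nonneg _) step1 2
  calc ‖∑ i, c i‖ ^ 2 ≤ (∑ i ∈ S, ‖c i‖) ^ 2 := step0
    _ ≤ S.card * ∑ i ∈ S, ‖c i‖ ^ 2 := step2
    _ ≤ S.card * ∑ i, lam i * ∑ b, ‖y i b‖ ^ 2 := by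
        apply mul_le_mul_of_nonneg_left step3 (by positivity)
    _ = S.card * ∑ i, ∑ b, lam i * ‖y i b‖ ^ 2 := by
        congr 1; exact Finset.sum_congr rfl fun i _ => Finset.mul_sum _ _ _

lemma traceHelper1 {m n : ℕ} (P Q : Matrix (Fin m) (Fin n) ℂ) :
    Matrix.trace (Pᴴ * Q) = ∑ a, ∑ b, (starRingEnd ℂ) (P a b) * Q a b := by
  rw [Matrix.trace]
  simp only [Matrix.diag_apply, Matrix.mul_apply, Matrix.conjTranspose_apply]
  rw [Finset.sum_comm]
  simp [Complex.star_def]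

lemma traceHelper2 {m n : ℕ} (lam : Fin m → ℝ) (Y : Matrix (Fin m) (Fin n) ℂ) :
    Matrix.trace (Yᴴ * Matrix.diagonal (fun i => (lam i : ℂ)) * Y)
      = ((∑ i, ∑ b, lam i * ‖Y i b‖ ^ 2 : ℝ) : ℂ) := by
  rw [Matrix.trace]
  simp only [Matrix.diag_apply, Matrix.mul_apply, Matrix.conjTranspose_apply,
    Matrix.diagonal_apply, mul_ite, mul_zero, ite_mul, zero_mul,
    Finset.sum_ite_eq, Finset.sum_ite_eq', Finset.mem_univ, if_true]
  rw [Finset.sum_comm]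
  push_cast
  refine Finset.sum_congr rfl fun i _ => Finset.sum_congr rfl fun b _ => ?_
  rw [Complex.star_def, mul_comm ((starRingEnd ℂ) (Y i b)) _, mul_assoc]
  nth_rewrite 2 [mul_comm]
  rw [Complex.mul_conj]
  rw [Complex.normSq_eq_norm_sq]
  push_cast
  ring

lemma quadKron {dA dB : ℕ} (A : Matrix (Fin dA) (Fin dA) ℂ) (x : Fin dA × Fin dB → ℂ) :
    star x ⬝ᵥ ((A ⊗ₖ (1 : Matrix (Fin dB) (Fin dB) ℂ)) *ᵥ x)
      = Matrix.trace ((Matrix.of fun a b => x (a, b))ᴴ * A * (Matrix.of fun a b => x (a, b))) := by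
  rw [Matrix.trace]
  simp only [Matrix.diag_apply, Matrix.mul_apply, Matrix.conjTranspose_apply, Matrix.of_apply,
    dotProduct, Matrix.mulVec, Pi.star_apply, Fintype.sum_prod_type,
    Matrix.kroneckerMap_apply, Matrix.one_apply, mul_ite, mul_one, mul_zero, ite_mul, zero_mul,
    Finset.sum_ite_eq, Finset.mem_univ, if_true, Finset.sum_mul, Finset.mul_sum]
  rw [Finset.sum_comm]
  refine Finset.sum_congr rfl fun b _ => ?_
  rw [Finset.sum_comm]
  refine Finset.sum_congr rfl fun a _ => Finset.sum_congr rfl fun a' _ => ?_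
  simp [Complex.star_def]; ring

lemma quadRho {N : Type*} [Fintype N] (ψ x : N → ℂ) :
    star x ⬝ᵥ (Matrix.vecMulVec ψ (star ψ) *ᵥ x)
      = (starRingEnd ℂ) (∑ p, (starRingEnd ℂ) (ψ p) * x p) * (∑ p, (starRingEnd ℂ) (ψ p) * x p) := by
  have step : star x ⬝ᵥ (Matrix.vecMulVec ψ (star ψ) *ᵥ x)
      = (∑ p, (starRingEnd ℂ) (x p) * ψ p) * (∑ q, (starRingEnd ℂ) (ψ q) * x q) := by
    simp only [dotProduct, Matrix.mulVec, Matrix.vecMulVec_apply, Pi.star_apply,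
      Complex.star_def, Finset.sum_mul, Finset.mul_sum]
    rw [Finset.sum_comm]
    refine Finset.sum_congr rfl fun p _ => Finset.sum_congr rfl fun q _ => ?_
    ring
  rw [step, map_sum]
  congr 1
  refine Finset.sum_congr rfl fun p _ => ?_
  rw [_root_.map_mul, Complex.conj_conj]
  ring

lemma ccEq {dA dB : ℕ} (ψ x : Fin dA × Fin dB → ℂ) (U : Matrix (Fin dA) (Fin dA) ℂ)
    (hUU : U * star U = 1) :
    (∑ p, (starRingEnd ℂ) (ψ p) * x p)
      = ∑ i, ∑ b, (starRingEnd ℂ) ((star U * Matrix.of fun a b => ψ (a, b)) i b) *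
          (star U * Matrix.of fun a b => x (a, b)) i b := by
  have h1 : (∑ p, (starRingEnd ℂ) (ψ p) * x p)
      = Matrix.trace ((Matrix.of fun a b => ψ (a, b))ᴴ * (Matrix.of fun a b => x (a, b))) := by
    rw [traceHelper1]
    rw [Fintype.sum_prod_type]
    rfl
  have h2 : (star U * Matrix.of fun a b => ψ (a, b))ᴴ * (star U * Matrix.of fun a b => x (a, b))
      = (Matrix.of fun a b => ψ (a, b))ᴴ * (Matrix.of fun a b => x (a, b)) := by
    rw [Matrix.conjTranspose_mul, Matrix.star_eq_conjTranspose U,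
      Matrix.conjTranspose_conjTranspose, Matrix.mul_assoc, ← Matrix.mul_assoc U,
      ← Matrix.star_eq_conjTranspose U, hUU, Matrix.one_mul]
  rw [h1, ← h2, traceHelper1]

lemma masterLemma {dA dB : ℕ} (ψ : Fin dA × Fin dB → ℂ) (A : Matrix (Fin dA) (Fin dA) ℂ)
    (U : Matrix (Fin dA) (Fin dA) ℂ) (lam : Fin dA → ℝ)
    (hspec2 : A = U * Matrix.diagonal (fun i => (lam i : ℂ)) * star U)
    (k : ℕ) (x : Fin dA × Fin dB → ℂ) :
    star x ⬝ᵥ (((k : ℂ) • (A ⊗ₖ (1 : Matrix (Fin dB) (Fin dB) ℂ)) - Matrix.vecMulVec ψ (star ψ)) *ᵥ x)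
      = (((k : ℝ) * (∑ i, ∑ b, lam i * ‖(star U * Matrix.of fun a b => x (a, b)) i b‖ ^ 2)
          - ‖∑ p, (starRingEnd ℂ) (ψ p) * x p‖ ^ 2 : ℝ) : ℂ) := by
  rw [Matrix.sub_mulVec, dotProduct_sub, Matrix.smul_mulVec, dotProduct_smul]
  have hQA : star x ⬝ᵥ ((A ⊗ₖ (1 : Matrix (Fin dB) (Fin dB) ℂ)) *ᵥ x)
      = ((∑ i, ∑ b, lam i * ‖(star U * Matrix.of fun a b => x (a, b)) i b‖ ^ 2 : ℝ) : ℂ) := by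
    rw [quadKron A x]
    have htr : (Matrix.of fun a b => x (a, b))ᴴ * A * (Matrix.of fun a b => x (a, b))
        = (star U * Matrix.of fun a b => x (a, b))ᴴ * Matrix.diagonal (fun i => (lam i : ℂ))
          * (star U * Matrix.of fun a b => x (a, b)) := by
      rw [hspec2]
      simp only [Matrix.conjTranspose_mul, Matrix.star_eq_conjTranspose,
        Matrix.conjTranspose_conjTranspose, Matrix.mul_assoc]
    rw [htr, traceHelper2]
  have hQρ : star x ⬝ᵥ (Matrix.vecMulVec ψ (star ψ) *ᵥ x)
      = ((‖∑ p, (starRingEnd ℂ) (ψ p) * x p‖ ^ 2 : ℝ) : ℂ) := by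
    rw [quadRho]
    rw [mul_comm, Complex.mul_conj, Complex.normSq_eq_norm_sq]
  rw [hQA, hQρ, smul_eq_mul]
  push_cast
  ring

/-- Partial trace over the second factor. -/
noncomputable def ptraceB (dA dB : ℕ) (ρ : Matrix (Fin dA × Fin dB) (Fin dA × Fin dB) ℂ) :
    Matrix (Fin dA) (Fin dA) ℂ :=
  fun a a' => ∑ b, ρ (a, b) (a', b)

set_option maxHeartbeats 3200000 in
theorem stmt8 (dA dB k : ℕ) (hk : 0 < k)
    (ψ : Fin dA × Fin dB → ℂ) (hnorm : ∑ p, ‖ψ p‖ ^ 2 = 1)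
    (ρ : Matrix (Fin dA × Fin dB) (Fin dA × Fin dB) ℂ)
    (hρ : ρ = Matrix.vecMulVec ψ (star ψ))
    (r : ℕ) (hr : r = (ptraceB dA dB ρ).rank)
    (R : Matrix (Fin dA × Fin dB) (Fin dA × Fin dB) ℂ)
    (hRdef : R = (k : ℂ) • (ptraceB dA dB ρ ⊗ₖ (1 : Matrix (Fin dB) (Fin dB) ℂ)) - ρ)
    (hR : R.IsHermitian) :
    (r ≤ k → R.PosSemidef) ∧
      (k < r → (Finset.univ.filter fun p => hR.eigenvalues p < 0).card = 1) := by
  classical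
  subst hρ
  subst hRdef
  set A : Matrix (Fin dA) (Fin dA) ℂ := ptraceB dA dB (Matrix.vecMulVec ψ (star ψ)) with hAdef
  set Ψ : Matrix (Fin dA) (Fin dB) ℂ := Matrix.of fun a b => ψ (a, b) with hΨdef
  have hAΨ : A = Ψ * Ψᴴ := by
    ext a a'
    simp [hAdef, ptraceB, Matrix.vecMulVec_apply, Matrix.mul_apply, hΨdef,
      Matrix.conjTranspose_apply, Complex.star_def]
  have hApsd : A.PosSemidef := by rw [hAΨ]; exact Matrix.posSemidef_self_mul_conjTranspose Ψ
  have hA : A.IsHermitian := hApsd.1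
  set U : Matrix (Fin dA) (Fin dA) ℂ :=
    (Matrix.IsHermitian.eigenvectorUnitary hA : Matrix (Fin dA) (Fin dA) ℂ) with hUdef
  set lam : Fin dA → ℝ := hA.eigenvalues with hlamdef
  have hlam : ∀ i, 0 ≤ lam i := fun i => hApsd.eigenvalues_nonneg i
  have hUU : U * star U = 1 :=
    Matrix.mem_unitaryGroup_iff.mp (Matrix.IsHermitian.eigenvectorUnitary hA).2
  have hU'U : star U * U = 1 :=
    Matrix.mem_unitaryGroup_iff'.mp (Matrix.IsHermitian.eigenvectorUnitary hA).2
  have hspec2 : A = U * Matrix.diagonal (fun i => (lam i : ℂ)) * star U := by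
    have h := Matrix.IsHermitian.spectral_theorem hA
    exact h
  set Φ : Matrix (Fin dA) (Fin dB) ℂ := star U * Ψ with hΦdef
  have hΦdiag : Φ * Φᴴ = Matrix.diagonal fun i => (lam i : ℂ) := by
    have hsp : star U * A * U = Matrix.diagonal fun i => (lam i : ℂ) := by
      calc star U * A * U
          = (star U * U) * Matrix.diagonal (fun i => (lam i : ℂ)) * (star U * U) := by
            rw [hspec2]; simp only [Matrix.mul_assoc]
        _ = _ := by rw [hU'U, Matrix.one_mul, Matrix.mul_one]
    rw [hΦdef, Matrix.conjTranspose_mul, Matrix.star_eq_conjTranspose U,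
      Matrix.conjTranspose_conjTranspose, ← hsp, hAΨ, Matrix.star_eq_conjTranspose U]
    simp only [Matrix.mul_assoc]
  have hφnC : ∀ i, ∑ b, Φ i b * (starRingEnd ℂ) (Φ i b) = ((lam i : ℝ) : ℂ) := by
    intro i
    have h := congrFun (congrFun hΦdiag i) i
    rw [Matrix.mul_apply] at h
    simp only [Matrix.conjTranspose_apply, Matrix.diagonal_apply_eq, Complex.star_def] at h
    exact h
  have hφn : ∀ i, ∑ b, ‖Φ i b‖ ^ 2 = lam i := by
    intro i
    have h2 : ((∑ b, ‖Φ i b‖ ^ 2 : ℝ) : ℂ) = ((lam i : ℝ) : ℂ) := by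
      rw [← hφnC i]
      push_cast
      refine Finset.sum_congr rfl fun b _ => ?_
      rw [Complex.mul_conj, Complex.normSq_eq_norm_sq]
      push_cast; ring
    exact_mod_cast h2
  have hφ0 : ∀ i, lam i = 0 → ∀ b, Φ i b = 0 := by
    intro i h0 b
    have hsum := hφn i
    rw [h0] at hsum
    have hnn : ∀ b' ∈ Finset.univ, (0:ℝ) ≤ ‖Φ i b'‖ ^ 2 := fun b' _ => by positivity
    have hb : ‖Φ i b‖ ^ 2 = 0 :=
      (Finset.sum_eq_zero_iff_of_nonneg hnn).mp hsum b (Finset.mem_univ b)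
    have : ‖Φ i b‖ = 0 := by
      nlinarith [norm_nonneg (Φ i b)]
    exact norm_eq_zero.mp this
  have hcard : (Finset.univ.filter fun i => lam i ≠ 0).card = r := by
    rw [hr, Matrix.IsHermitian.rank_eq_card_non_zero_eigs hA, Fintype.card_subtype]
  have hQrnn : ∀ x : Fin dA × Fin dB → ℂ,
      (0:ℝ) ≤ ∑ i, ∑ b, lam i * ‖(star U * Matrix.of fun a b => x (a, b)) i b‖ ^ 2 :=
    fun x => Finset.sum_nonneg fun i _ => Finset.sum_nonneg fun b _ =>
      mul_nonneg (hlam i) (by positivity)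
  constructor
  · -- r ≤ k : positive semidefinite
    intro hrk
    refine Matrix.PosSemidef.of_dotProduct_mulVec_nonneg hR fun x => ?_
    rw [masterLemma ψ A U lam hspec2 k x, Complex.zero_le_real]
    have hk1 : ‖∑ i, ∑ b, (starRingEnd ℂ) (Φ i b) *
          (star U * Matrix.of fun a b => x (a, b)) i b‖ ^ 2 ≤
        ((Finset.univ.filter fun i => lam i ≠ 0).card : ℝ) *
          ∑ i, ∑ b, lam i * ‖(star U * Matrix.of fun a b => x (a, b)) i b‖ ^ 2 :=
      key1 lam hlam (fun i b => Φ i b) (fun i b => (star U * Matrix.of fun a b => x (a, b)) i b)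
        hφ0 hφn
    rw [hcard] at hk1
    rw [← ccEq ψ x U hUU] at hk1
    have hle : (r : ℝ) * (∑ i, ∑ b, lam i * ‖(star U * Matrix.of fun a b => x (a, b)) i b‖ ^ 2)
        ≤ (k : ℝ) * ∑ i, ∑ b, lam i * ‖(star U * Matrix.of fun a b => x (a, b)) i b‖ ^ 2 :=
      mul_le_mul_of_nonneg_right (by exact_mod_cast hrk) (hQrnn x)
    linarith
  · -- k < r : exactly one negative eigenvalue
    intro hkr
    have hk1r : k + 1 ≤ (Finset.univ.filter fun i => lam i ≠ 0).card := by
      rw [hcard]; omega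
    obtain ⟨S, hSsub, hScard⟩ := Finset.exists_subset_card_eq hk1r
    have hlamS : ∀ i ∈ S, lam i ≠ 0 := fun i hi => (Finset.mem_filter.mp (hSsub hi)).2
    set G : Matrix (Fin dA) (Fin dB) ℂ :=
      Matrix.of (fun i b => if i ∈ S then Φ i b / (lam i : ℂ) else 0) with hGdef
    set x0 : Fin dA × Fin dB → ℂ := fun p => (U * G) p.1 p.2 with hx0
    have hMx0 : (Matrix.of fun a b => x0 (a, b)) = U * G := by
      ext a b; simp [hx0]
    have hY0 : star U * (Matrix.of fun a b => x0 (a, b)) = G := by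
      rw [hMx0, ← Matrix.mul_assoc, hU'U, Matrix.one_mul]
    have hcc0 : (∑ p, (starRingEnd ℂ) (ψ p) * x0 p) = ((k : ℂ) + 1) := by
      rw [ccEq ψ x0 U hUU, ← hΨdef, ← hΦdef, hY0]
      have hterm : ∀ i, (∑ b, (starRingEnd ℂ) (Φ i b) * G i b) = if i ∈ S then (1:ℂ) else 0 := by
        intro i
        by_cases hi : i ∈ S
        · simp only [hGdef, Matrix.of_apply, hi, if_true]
          rw [show (∑ b, (starRingEnd ℂ) (Φ i b) * (Φ i b / (lam i : ℂ)))
              = (∑ b, Φ i b * (starRingEnd ℂ) (Φ i b)) / (lam i : ℂ) by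
            rw [Finset.sum_div]; exact Finset.sum_congr rfl fun b _ => by ring]
          rw [hφnC i, div_self (Complex.ofReal_ne_zero.mpr (hlamS i hi))]
        · simp [hGdef, hi]
      rw [Finset.sum_congr rfl fun i _ => hterm i, Finset.sum_ite_mem, Finset.univ_inter,
        Finset.sum_const, hScard, nsmul_eq_mul, mul_one]
      push_cast; ring
    have hQr0 : (∑ i, ∑ b, lam i * ‖(star U * Matrix.of fun a b => x0 (a, b)) i b‖ ^ 2)
        = ((k : ℝ) + 1) := by
      rw [hY0]
      have hterm : ∀ i, (∑ b, lam i * ‖G i b‖ ^ 2) = if i ∈ S then (1:ℝ) else 0 := by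
        intro i
        by_cases hi : i ∈ S
        · simp only [hGdef, Matrix.of_apply, hi, if_true]
          have hnorm2 : ∀ b, ‖Φ i b / (lam i : ℂ)‖ ^ 2 = ‖Φ i b‖ ^ 2 / (lam i) ^ 2 := by
            intro b
            rw [norm_div, div_pow]
            congr 1
            rw [Complex.norm_real, Real.norm_eq_abs, sq_abs]
          rw [Finset.sum_congr rfl fun b _ => by rw [hnorm2 b]]
          rw [← Finset.mul_sum, ← Finset.sum_div, hφn i]
          have hne := hlamS i hi
          field_simp
        · simp [hGdef, hi]
      rw [Finset.sum_congr rfl fun i _ => hterm i, Finset.sum_ite_mem, Finset.univ_inter,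
        Finset.sum_const, hScard, nsmul_eq_mul, mul_one]
      push_cast; ring
    have hex : ∃ p', hR.eigenvalues p' < 0 := by
      by_contra hcon
      push_neg at hcon
      have hpsd := hR.posSemidef_iff_eigenvalues_nonneg.mpr hcon
      have h0 := hpsd.dotProduct_mulVec_nonneg x0
      rw [masterLemma ψ A U lam hspec2 k x0, Complex.zero_le_real, hQr0, hcc0] at h0
      have hknorm : ‖(k : ℂ) + 1‖ = (k : ℝ) + 1 := by
        have h1 : ((k : ℂ) + 1) = (((k + 1 : ℕ) : ℕ) : ℂ) := by push_cast; ring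
        rw [h1, Complex.norm_natCast]
        push_cast; ring
      rw [hknorm] at h0
      have hknn' : (0:ℝ) ≤ (k:ℝ) := Nat.cast_nonneg k
      nlinarith [h0]
    obtain ⟨p0, hp0⟩ := hex
    rw [Finset.card_eq_one]
    refine ⟨p0, ?_⟩
    ext q
    simp only [Finset.mem_filter, Finset.mem_univ, true_and, Finset.mem_singleton]
    constructor
    · intro hq
      by_contra hqp
      -- two distinct negative eigenvalues: contradiction
      set u : Fin dA × Fin dB → ℂ := ⇑(hR.eigenvectorBasis q) with hudef
      set v : Fin dA × Fin dB → ℂ := ⇑(hR.eigenvectorBasis p0) with hvdef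
      have hON := hR.eigenvectorBasis.orthonormal
      have hdotinner : ∀ f g : EuclideanSpace ℂ (Fin dA × Fin dB),
          star (⇑f) ⬝ᵥ (⇑g) = (inner ℂ f g : ℂ) := by
        intro f g
        simp [dotProduct, PiLp.inner_apply, RCLike.inner_apply, Complex.star_def, mul_comm]
      have huu : star u ⬝ᵥ u = 1 := by
        rw [hudef, hdotinner, inner_self_eq_norm_sq_to_K, hON.1 q]
        norm_num
      have hvv : star v ⬝ᵥ v = 1 := by
        rw [hvdef, hdotinner, inner_self_eq_norm_sq_to_K, hON.1 p0]
        norm_num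
      have huv : star u ⬝ᵥ v = 0 := by
        rw [hudef, hvdef, hdotinner]
        exact hON.2 hqp
      have hvu : star v ⬝ᵥ u = 0 := by
        rw [hudef, hvdef, hdotinner]
        exact hON.2 fun h => hqp h.symm
      set cu : ℂ := ∑ p', (starRingEnd ℂ) (ψ p') * u p' with hcu
      set cv : ℂ := ∑ p', (starRingEnd ℂ) (ψ p') * v p' with hcv
      have hgen : ∀ γ δ : ℂ, γ * cu + δ * cv = 0 → (γ ≠ 0 ∨ δ ≠ 0) → False := by
        intro γ δ hzero hnz
        set x1 : Fin dA × Fin dB → ℂ := γ • u + δ • v with hx1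
        have hmul : ((k : ℂ) • (A ⊗ₖ (1 : Matrix (Fin dB) (Fin dB) ℂ))
              - Matrix.vecMulVec ψ (star ψ)) *ᵥ x1
            = γ • (hR.eigenvalues q • u) + δ • (hR.eigenvalues p0 • v) := by
          rw [hx1, Matrix.mulVec_add, Matrix.mulVec_smul, Matrix.mulVec_smul,
            hudef, hvdef, hR.mulVec_eigenvectorBasis q, hR.mulVec_eigenvectorBasis p0]
        have hEig : star x1 ⬝ᵥ (((k : ℂ) • (A ⊗ₖ (1 : Matrix (Fin dB) (Fin dB) ℂ))
              - Matrix.vecMulVec ψ (star ψ)) *ᵥ x1)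
            = ((‖γ‖ ^ 2 * hR.eigenvalues q + ‖δ‖ ^ 2 * hR.eigenvalues p0 : ℝ) : ℂ) := by
          rw [hmul, hx1]
          have e1 : (starRingEnd ℂ) γ * γ = ((‖γ‖ : ℝ) : ℂ) ^ 2 := by
            rw [mul_comm, Complex.mul_conj, Complex.normSq_eq_norm_sq]
            norm_cast
          have e2 : (starRingEnd ℂ) δ * δ = ((‖δ‖ : ℝ) : ℂ) ^ 2 := by
            rw [mul_comm, Complex.mul_conj, Complex.normSq_eq_norm_sq]
            norm_cast
          simp only [star_add, star_smul, add_dotProduct, smul_dotProduct, dotProduct_add,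
            dotProduct_smul, huu, hvv, huv, hvu, smul_eq_mul, Complex.real_smul, mul_one,
            mul_zero, add_zero, zero_add, Complex.star_def]
          push_cast
          linear_combination ((hR.eigenvalues q : ℝ) : ℂ) * e1 + ((hR.eigenvalues p0 : ℝ) : ℂ) * e2
        have hM := masterLemma ψ A U lam hspec2 k x1
        have hcclin : (∑ p', (starRingEnd ℂ) (ψ p') * x1 p') = γ * cu + δ * cv := by
          rw [hcu, hcv, Finset.mul_sum, Finset.mul_sum, ← Finset.sum_add_distrib]
          refine Finset.sum_congr rfl fun p' _ => ?_
          simp only [hx1, Pi.add_apply, Pi.smul_apply, smul_eq_mul]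
          ring
        rw [hcclin, hzero, hEig] at hM
        have hreal := Complex.ofReal_inj.mp hM
        have hQ1 := hQrnn x1
        have hknn : (0:ℝ) ≤ (k:ℝ) := Nat.cast_nonneg k
        have hn0 : ‖(0:ℂ)‖ = (0:ℝ) := norm_zero
        rw [hn0] at hreal
        have hQ1nn : (0:ℝ) ≤ (k:ℝ) * (∑ i, ∑ b,
            lam i * ‖(star U * Matrix.of fun a b => x1 (a, b)) i b‖ ^ 2) :=
          mul_nonneg hknn hQ1
        have hRHSneg : ‖γ‖ ^ 2 * hR.eigenvalues q + ‖δ‖ ^ 2 * hR.eigenvalues p0 < 0 := by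
          rcases hnz with hγ | hδ
          · have hγp : (0:ℝ) < ‖γ‖ ^ 2 := pow_pos (norm_pos_iff.mpr hγ) 2
            nlinarith [sq_nonneg ‖δ‖]
          · have hδp : (0:ℝ) < ‖δ‖ ^ 2 := pow_pos (norm_pos_iff.mpr hδ) 2
            nlinarith [sq_nonneg ‖γ‖]
        nlinarith [hreal, hRHSneg, hQ1nn]
      by_cases hcu0 : cu = 0
      · exact absurd (hgen 1 0 (by rw [hcu0]; ring) (Or.inl one_ne_zero)) (by simp)
      · exact absurd (hgen cv (-cu) (by ring) (Or.inr (neg_ne_zero.mpr hcu0))) (by simp)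
    · rintro rfl; exact hp0
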